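/- Let z ∈ ℂ and let {a_n}, {z_n} be an infinite continued fraction expansion and iteration sequence of z over the Eisenstein integers 𝔈 with respect to a nearest integer algorithm, with Q-pair {p_n}, {q_n}. Then the convergents p_n/q_n converge to z as n → ∞. -/

import Mathlib

open Complex

/-- The primitive cube root of unity ω = (−1 + √3·i)/2. -/
noncomputable def eisOmega : ℂ := (-1 + Real.sqrt 3 * Complex.I) / 2

/-- `a : ℂ` is an Eisenstein integer: `a = x + y·ω` with `x, y ∈ ℤ`. -/
def IsEis (a : ℂ) : Prop := ∃ x y : ℤ, a = (x : ℂ) + (y : ℂ) * eisOmega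

lemma eisOmega_re : eisOmega.re = -(1/2) := by
  simp [eisOmega]; norm_num

lemma eisOmega_im : eisOmega.im = Real.sqrt 3 / 2 := by
  simp [eisOmega]

lemma eis_normSq (δ ε : ℝ) :
    Complex.normSq ((δ:ℂ) + (ε:ℂ) * eisOmega) = δ^2 - δ*ε + ε^2 := by
  have h3 : Real.sqrt 3 * Real.sqrt 3 = 3 := Real.mul_self_sqrt (by norm_num)
  simp [Complex.normSq_apply, Complex.add_re, Complex.add_im, Complex.mul_re,
    Complex.mul_im, eisOmega_re, eisOmega_im, Complex.ofReal_re, Complex.ofReal_im]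
  ring_nf
  nlinarith [h3]

lemma eisOmega_sq : eisOmega^2 = -1 - eisOmega := by
  have hs : (Real.sqrt 3 : ℂ) * (Real.sqrt 3 : ℂ) = 3 := by
    norm_cast
    rw [Real.mul_self_sqrt] <;> norm_num
  simp only [eisOmega]
  linear_combination (Complex.I^2/4) * hs + (3/4) * Complex.I_sq

lemma IsEis.add {a b : ℂ} (ha : IsEis a) (hb : IsEis b) : IsEis (a + b) := by
  obtain ⟨x, y, rfl⟩ := ha; obtain ⟨u, v, rfl⟩ := hb
  exact ⟨x + u, y + v, by push_cast; ring⟩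

lemma IsEis.mul {a b : ℂ} (ha : IsEis a) (hb : IsEis b) : IsEis (a * b) := by
  obtain ⟨x, y, rfl⟩ := ha; obtain ⟨u, v, rfl⟩ := hb
  refine ⟨x*u - y*v, x*v + y*u - y*v, ?_⟩
  push_cast
  linear_combination ((y:ℂ) * (v:ℂ)) * eisOmega_sq

lemma isEis_zero : IsEis 0 := ⟨0, 0, by simp⟩
lemma isEis_one : IsEis 1 := ⟨1, 0, by simp⟩

lemma one_le_abs_of_isEis {a : ℂ} (h : IsEis a) (h0 : a ≠ 0) : 1 ≤ ‖a‖ := by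
  obtain ⟨x, y, rfl⟩ := h
  have hns : Complex.normSq ((x:ℂ) + (y:ℂ) * eisOmega) = (x:ℝ)^2 - (x:ℝ)*(y:ℝ) + (y:ℝ)^2 := by
    have := eis_normSq (x:ℝ) (y:ℝ)
    push_cast at this ⊢
    exact this
  have hxy : ¬ (x = 0 ∧ y = 0) := by
    rintro ⟨rfl, rfl⟩; simp at h0
  have hint : 1 ≤ x^2 - x*y + y^2 := by
    by_cases hy : y = 0
    · subst hy
      have hx : x ≠ 0 := by tauto
      have : 1 ≤ x^2 := by nlinarith [Int.one_le_abs hx, _root_.sq_abs x, abs_nonneg x]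
      linarith
    · have hy2 : 1 ≤ y^2 := by nlinarith [Int.one_le_abs hy, _root_.sq_abs y, abs_nonneg y]
      have h4 : 3 ≤ 4 * (x^2 - x*y + y^2) := by nlinarith [sq_nonneg (2*x - y)]
      omega
  have hns1 : 1 ≤ Complex.normSq ((x:ℂ) + (y:ℂ) * eisOmega) := by
    rw [hns]
    have : ((1:ℤ):ℝ) ≤ ((x^2 - x*y + y^2 : ℤ) : ℝ) := by exact_mod_cast hint
    push_cast at this
    linarith
  have habs := Complex.sq_norm ((x:ℂ) + (y:ℂ) * eisOmega)
  nlinarith [norm_nonneg ((x:ℂ) + (y:ℂ) * eisOmega)]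

lemma key_quad (d e : ℝ) (hd : |d| ≤ 1/2) (he : |e| ≤ 1/2) :
    d^2 - d*e + e^2 ≤ 3/4 := by
  have h1 : d^2 ≤ 1/4 := by nlinarith [_root_.sq_abs d, abs_nonneg d]
  have h2 : e^2 ≤ 1/4 := by nlinarith [_root_.sq_abs e, abs_nonneg e]
  have h5 : |d * e| ≤ 1/4 := by rw [abs_mul]; nlinarith [abs_nonneg d, abs_nonneg e]
  have h6 := neg_abs_le (d * e)
  linarith

lemma exists_eis_near (w : ℂ) :
    ∃ b, IsEis b ∧ ‖w - b‖ ≤ Real.sqrt 3 / 2 := by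
  have h3 : (0:ℝ) < Real.sqrt 3 := by positivity
  set t : ℝ := 2 * w.im / Real.sqrt 3 with ht
  set s : ℝ := w.re + t/2 with hs
  have hw : w = (s:ℂ) + (t:ℂ) * eisOmega := by
    apply Complex.ext
    · simp [Complex.add_re, Complex.mul_re, eisOmega_re, eisOmega_im, hs]
      ring
    · simp [Complex.add_im, Complex.mul_im, eisOmega_re, eisOmega_im, ht]
      field_simp
  refine ⟨(↑(round s) : ℂ) + (↑(round t) : ℂ) * eisOmega, ⟨round s, round t, rfl⟩, ?_⟩
  have hdiff : w - ((↑(round s) : ℂ) + (↑(round t) : ℂ) * eisOmega)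
      = ((s - round s : ℝ) : ℂ) + ((t - round t : ℝ) : ℂ) * eisOmega := by
    rw [hw]; push_cast; ring
  rw [hdiff]
  have hδ := abs_sub_round s
  have hε := abs_sub_round t
  have hns := eis_normSq (s - round s) (t - round t)
  have hsq : Complex.normSq (((s - round s : ℝ) : ℂ) + ((t - round t : ℝ) : ℂ) * eisOmega) ≤ 3/4 := by
    rw [hns]
    exact key_quad _ _ hδ hε
  rw [Complex.norm_def]
  have h4 : Real.sqrt (3/4) = Real.sqrt 3 / 2 := by
    rw [Real.sqrt_div (by norm_num : (0:ℝ) ≤ 3) 4]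
    rw [show (4:ℝ) = 2^2 by norm_num, Real.sqrt_sq (by norm_num : (0:ℝ) ≤ 2)]
  calc Real.sqrt (Complex.normSq _) ≤ Real.sqrt (3/4) := Real.sqrt_le_sqrt hsq
    _ = Real.sqrt 3 / 2 := h4

/-- The convergents pₙ/qₙ converge to z.  (Here `p (n+1)`, `q (n+1)` denote pₙ, qₙ.) -/
theorem eisenstein_cf_convergents_tendsto
    (z : ℂ) (a zs : ℕ → ℂ)
    (ha : ∀ n, IsEis (a n))
    (hz0 : zs 0 = z)
    (hnear : ∀ n, ∀ b : ℂ, IsEis b → ‖zs n - a n‖ ≤ ‖zs n - b‖)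
    (hne : ∀ n, zs n ≠ a n)
    (hit : ∀ n, zs (n + 1) = (zs n - a n)⁻¹)
    (p q : ℕ → ℂ)
    (hp0 : p 0 = 1) (hp1 : p 1 = a 0)
    (hprec : ∀ n, p (n + 2) = a (n + 1) * p (n + 1) + p n)
    (hq0 : q 0 = 0) (hq1 : q 1 = 1)
    (hqrec : ∀ n, q (n + 2) = a (n + 1) * q (n + 1) + q n)
    (hqne : ∀ n, q (n + 1) ≠ 0)
    :
    Filter.Tendsto (fun n : ℕ => p (n + 1) / q (n + 1)) Filter.atTop (nhds z) := by
  have h3 : (0:ℝ) < Real.sqrt 3 := by positivity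
  have h3lt2 : Real.sqrt 3 < 2 := by
    nlinarith [Real.sq_sqrt (by norm_num : (0:ℝ) ≤ 3), Real.sqrt_nonneg 3]
  -- q's are Eisenstein integers
  have hEq : ∀ n, IsEis (q n) ∧ IsEis (q (n+1)) := by
    intro n
    induction n with
    | zero => exact ⟨hq0 ▸ isEis_zero, hq1 ▸ isEis_one⟩
    | succ n ih => exact ⟨ih.2, (hqrec n) ▸ (((ha (n+1)).mul ih.2).add ih.1)⟩
  have hqabs : ∀ n, 1 ≤ ‖q (n+1)‖ :=
    fun n => one_le_abs_of_isEis (hEq n).2 (hqne n)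
  -- distance bound from the nearest-integer property
  have hdist : ∀ n, ‖zs n - a n‖ ≤ Real.sqrt 3 / 2 := by
    intro n
    obtain ⟨b, hb, hble⟩ := exists_eis_near (zs n)
    exact (hnear n b hb).trans hble
  have hzs_ne : ∀ n, zs n - a n ≠ 0 := fun n => sub_ne_zero.mpr (hne n)
  have hzs1_ne : ∀ n, zs (n+1) ≠ 0 := fun n => by
    rw [hit]; exact inv_ne_zero (hzs_ne n)
  have hzs_lb : ∀ n, 2 / Real.sqrt 3 ≤ ‖zs (n+1)‖ := by
    intro n
    rw [hit, norm_inv]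
    have hpos : 0 < ‖zs n - a n‖ := norm_pos_iff.mpr (hzs_ne n)
    have hle := one_div_le_one_div_of_le hpos (hdist n)
    rw [one_div_div] at hle
    simpa [one_div] using hle
  -- the key quantity Wₙ = qₙ₊₁·zsₙ₊₁ + qₙ
  set W : ℕ → ℂ := fun n => q (n+1) * zs (n+1) + q n with hWdef
  have hinv : ∀ n, zs (n+1) * (zs n - a n) = 1 := by
    intro n; rw [hit]; exact inv_mul_cancel₀ (hzs_ne n)
  have hWrec : ∀ n, W (n+1) = zs (n+2) * W n := by
    intro n
    simp only [hWdef]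
    rw [hqrec]
    linear_combination (-(q (n+1))) * hinv (n+1)
  have hWlb : ∀ n, (2/Real.sqrt 3)^(n+1) ≤ ‖W n‖ := by
    intro n
    induction n with
    | zero =>
      have : W 0 = zs 1 := by simp [hWdef, hq0, hq1]
      rw [this, pow_one]
      exact hzs_lb 0
    | succ n ih =>
      rw [hWrec n, norm_mul, pow_succ]
      calc (2/Real.sqrt 3)^(n+1) * (2/Real.sqrt 3)
          ≤ ‖W n‖ * ‖zs (n+2)‖ := by
            apply mul_le_mul ih (hzs_lb (n+1)) (by positivity) (norm_nonneg _)
        _ = ‖zs (n+2)‖ * ‖W n‖ := mul_comm _ _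
  have hW_ne : ∀ n, W n ≠ 0 := by
    intro n hn
    have := hWlb n
    rw [hn, norm_zero] at this
    have : (0:ℝ) < (2/Real.sqrt 3)^(n+1) := by positivity
    linarith [hWlb n, (by rw [hn, norm_zero] : ‖W n‖ = 0)]
  -- the fundamental identity z·Wₙ = pₙ₊₁·zsₙ₊₁ + pₙ
  have hH : ∀ n, z * W n = p (n+1) * zs (n+1) + p n := by
    intro n
    induction n with
    | zero =>
      simp only [hWdef, hq0, hq1, hp0, hp1, one_mul, add_zero]
      linear_combination hinv 0 - zs 1 * hz0
    | succ n ih =>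
      rw [hWrec n, hprec]
      linear_combination zs (n+2) * ih + (p (n+1)) * hinv (n+1)
  -- the determinant identity
  have hD : ∀ n, p (n+1) * q n - p n * q (n+1) = (-1:ℂ)^(n+1) := by
    intro n
    induction n with
    | zero => simp [hp0, hp1, hq0, hq1]
    | succ n ih =>
      rw [hprec, hqrec, pow_succ]
      linear_combination (-1:ℂ) * ih
  -- the error formula and bound
  have herr : ∀ n, ‖p (n+1) / q (n+1) - z‖ ≤ (Real.sqrt 3 / 2)^(n+1) := by
    intro n
    have hkey : (p (n+1) - z * q (n+1)) * W n = p (n+1) * q n - p n * q (n+1) := by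
      simp only [hWdef]
      linear_combination (-(q (n+1))) * hH n
    have hfrac : p (n+1) / q (n+1) - z = ((-1:ℂ)^(n+1)) / (q (n+1) * W n) := by
      rw [div_sub' (hqne n), ← hD n, ← hkey]
      rw [div_eq_div_iff (hqne n) (mul_ne_zero (hqne n) (hW_ne n))]
      ring
    rw [hfrac, norm_div, norm_mul, norm_pow]
    simp only [norm_neg, norm_one, one_pow]
    have hprod : (2/Real.sqrt 3)^(n+1) ≤ ‖q (n+1)‖ * ‖W n‖ := by
      calc (2/Real.sqrt 3)^(n+1) = 1 * (2/Real.sqrt 3)^(n+1) := (one_mul _).symm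
        _ ≤ ‖q (n+1)‖ * ‖W n‖ :=
          mul_le_mul (hqabs n) (hWlb n) (by positivity) ((hqabs n).trans' (by norm_num))
    have hpow_pos : (0:ℝ) < (2/Real.sqrt 3)^(n+1) := by positivity
    calc 1 / (‖q (n+1)‖ * ‖W n‖)
        ≤ 1 / ((2/Real.sqrt 3)^(n+1)) := one_div_le_one_div_of_le hpow_pos hprod
      _ = (Real.sqrt 3 / 2)^(n+1) := by
          rw [one_div, ← inv_pow, inv_div]
  -- conclude
  have hlim : Filter.Tendsto (fun n : ℕ => (Real.sqrt 3 / 2)^(n+1)) Filter.atTop (nhds 0) := by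
    have hlt1 : Real.sqrt 3 / 2 < 1 := by linarith
    have hge0 : (0:ℝ) ≤ Real.sqrt 3 / 2 := by positivity
    have := tendsto_pow_atTop_nhds_zero_of_lt_one hge0 hlt1
    exact this.comp (Filter.tendsto_add_atTop_nat 1)
  have hzero : Filter.Tendsto (fun n : ℕ => p (n+1) / q (n+1) - z) Filter.atTop (nhds 0) := by
    apply squeeze_zero_norm _ hlim
    intro n
    simpa using herr n
  simpa using hzero.add_const z
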